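/- arXiv:2010.10692 — 2 statements merged into one kernel-verified Lean document; each statement's English description precedes it below -/
import Mathlib

section
/- Let U ⊂ ℝⁿ be a bounded convex set and let u ∈ C⁴(Ū). Denote by λ₁(x) ≤ ⋯ ≤ λₙ(x) the eigenvalues of the Hessian D²u(x) in increasing order. Then for each k = 1, …, n the function Ū → ℝ given by x ↦ λ₁(x) + ⋯ + λ_k(x) is semi-concave, i.e. there exists M such that x ↦ λ₁(x) + ⋯ + λ_k(x) − M|x|² is concave on Ū. -/
open Metric

/-- The `i`-th partial derivative (0-based, junk value `0` if `i ≥ n`). -/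
noncomputable def pd {n : ℕ} (f : EuclideanSpace ℝ (Fin n) → ℝ)
    (x : EuclideanSpace ℝ (Fin n)) (i : ℕ) : ℝ :=
  if h : i < n then fderiv ℝ f x (EuclideanSpace.single ⟨i, h⟩ 1) else 0

/-- The Hessian matrix of second partial derivatives. -/
noncomputable def hessM {n : ℕ} (u : EuclideanSpace ℝ (Fin n) → ℝ)
    (x : EuclideanSpace ℝ (Fin n)) : Matrix (Fin n) (Fin n) ℝ :=
  Matrix.of fun i j => pd (fun y => pd u y (j : ℕ)) x (i : ℕ)

open Polynomial Finset

section PartA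

variable {n k : ℕ}

lemma charpoly_diagonal_real (d : Fin n → ℝ) :
    (Matrix.diagonal d).charpoly = ∏ i, (X - C (d i)) := by
  rw [Matrix.charpoly_of_upperTriangular _ (Matrix.blockTriangular_diagonal d)]
  simp [Matrix.diagonal_apply_eq]

lemma charpoly_conj_unitary (U D : Matrix (Fin n) (Fin n) ℝ)
    (h1 : U * star U = 1) :
    (U * D * star U).charpoly = D.charpoly := by
  classical
  have key : Matrix.charmatrix (U * D * star U) =
      (U.map C) * Matrix.charmatrix D * ((star U).map C) := by
    have hsc : Matrix.scalar (Fin n) (X : ℝ[X]) =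
        (U.map C) * Matrix.scalar (Fin n) (X : ℝ[X]) * ((star U).map C) := by
      have hcomm : Commute (Matrix.scalar (Fin n) (X : ℝ[X])) (U.map C) :=
        Matrix.scalar_commute (X : ℝ[X]) (fun r' => Commute.all _ _) (U.map C)
      calc Matrix.scalar (Fin n) (X : ℝ[X])
          = Matrix.scalar (Fin n) (X : ℝ[X]) * ((U * star U).map (C : ℝ →+* ℝ[X])) := by
            rw [h1]; simp
        _ = Matrix.scalar (Fin n) (X : ℝ[X]) * (U.map C * (star U).map C) := by
            rw [Matrix.map_mul]
        _ = (U.map C) * Matrix.scalar (Fin n) (X : ℝ[X]) * ((star U).map C) := by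
            rw [← mul_assoc, hcomm.eq]
    have hmap : ((U * D * star U).map (C : ℝ →+* ℝ[X])) =
        (U.map C) * (D.map C) * ((star U).map C) := by
      rw [Matrix.map_mul, Matrix.map_mul]
    unfold Matrix.charmatrix
    rw [RingHom.mapMatrix_apply, RingHom.mapMatrix_apply, hmap, Matrix.mul_sub, Matrix.sub_mul,
      ← hsc]
  unfold Matrix.charpoly
  rw [key, Matrix.det_mul, Matrix.det_mul]
  have : (U.map (C : ℝ →+* ℝ[X])).det * ((star U).map (C : ℝ →+* ℝ[X])).det = 1 := by
    rw [← Matrix.det_mul, ← Matrix.map_mul, h1]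
    simp
  calc (U.map (C : ℝ →+* ℝ[X])).det * (Matrix.charmatrix D).det * ((star U).map (C : ℝ →+* ℝ[X])).det
      = (Matrix.charmatrix D).det *
        ((U.map (C : ℝ →+* ℝ[X])).det * ((star U).map (C : ℝ →+* ℝ[X])).det) := by ring
    _ = (Matrix.charmatrix D).det := by rw [this, mul_one]

lemma charpoly_isHermitian_real (A : Matrix (Fin n) (Fin n) ℝ) (hA : A.IsHermitian) :
    A.charpoly = ∏ i, (X - C (hA.eigenvalues i)) := by
  have hspec := hA.spectral_theorem
  have hcomp : (RCLike.ofReal ∘ hA.eigenvalues : Fin n → ℝ) = hA.eigenvalues := by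
    funext i; simp
  have h1 : (hA.eigenvectorUnitary : Matrix (Fin n) (Fin n) ℝ) *
      star (hA.eigenvectorUnitary : Matrix (Fin n) (Fin n) ℝ) = 1 :=
    Matrix.mem_unitaryGroup_iff.mp hA.eigenvectorUnitary.2
  rw [hcomp] at hspec
  conv_lhs => rw [hspec]
  rw [Unitary.conjStarAlgAut_apply, charpoly_conj_unitary _ _ h1, charpoly_diagonal_real]

lemma multiset_eq_of_prod_eq (f g : Fin n → ℝ)
    (h : ∏ i, (X - C (f i)) = ∏ i, (X - C (g i))) :
    Multiset.map f Finset.univ.val = Multiset.map g Finset.univ.val := by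
  have hf : ∏ i, (X - C (f i)) =
      ((Multiset.map f Finset.univ.val).map fun a => X - C a).prod := by
    rw [Multiset.map_map]; rfl
  have hg : ∏ i, (X - C (g i)) =
      ((Multiset.map g Finset.univ.val).map fun a => X - C a).prod := by
    rw [Multiset.map_map]; rfl
  have := congrArg Polynomial.roots (hf ▸ hg ▸ h)
  rwa [Polynomial.roots_multiset_prod_X_sub_C, Polynomial.roots_multiset_prod_X_sub_C] at this

lemma monotone_eq_of_multiset_eq (f g : Fin n → ℝ) (hf : Monotone f) (hg : Monotone g)
    (h : Multiset.map f Finset.univ.val = Multiset.map g Finset.univ.val) : f = g := by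
  have huniv : (Finset.univ.val : Multiset (Fin n)) = ↑(List.finRange n) := rfl
  rw [huniv] at h
  have h' : (((List.finRange n).map f : List ℝ) : Multiset ℝ) =
      ((List.finRange n).map g : List ℝ) := by
    simpa using h
  rw [Multiset.coe_eq_coe] at h'
  rw [← List.ofFn_eq_map, ← List.ofFn_eq_map] at h'
  have := List.Perm.eq_of_sortedLE (hf.sortedLE_ofFn) (hg.sortedLE_ofFn) h'
  exact List.ofFn_inj.mp this

lemma exists_perm_eq_comp (f g : Fin n → ℝ) (hf : Monotone f)
    (h : Multiset.map f Finset.univ.val = Multiset.map g Finset.univ.val) :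
    ∃ σ : Equiv.Perm (Fin n), f = g ∘ σ := by
  refine ⟨Tuple.sort g, ?_⟩
  apply monotone_eq_of_multiset_eq _ _ hf (Tuple.monotone_sort g)
  have h2 : Multiset.map (g ∘ Tuple.sort g) Finset.univ.val =
      Multiset.map g (Multiset.map (Tuple.sort g) Finset.univ.val) :=
    (Multiset.map_map _ _ _).symm
  rw [h, h2, Multiset.map_univ_val_equiv]

end PartA

open Finset

noncomputable def QF {n : ℕ} (A : Matrix (Fin n) (Fin n) ℝ) (v : EuclideanSpace ℝ (Fin n)) : ℝ :=
  ∑ i, ∑ j, v i * v j * A i j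

section PartB

variable {n k : ℕ}

lemma filter_lt_eq_map (hkn : k ≤ n) :
    univ.filter (fun i : Fin n => (i : ℕ) < k) =
      Finset.map (Fin.castLEEmb hkn) univ := by
  ext i
  simp only [Finset.mem_filter, Finset.mem_univ, true_and, Finset.mem_map]
  constructor
  · intro hi
    exact ⟨⟨(i : ℕ), hi⟩, by simp [Fin.castLEEmb, Fin.castLE, Fin.ext_iff]⟩
  · rintro ⟨l, rfl⟩
    simpa [Fin.castLEEmb, Fin.castLE] using l.isLt

lemma sum_filter_lt (hkn : k ≤ n) (F : Fin n → ℝ) :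
    ∑ i ∈ univ.filter (fun i : Fin n => (i : ℕ) < k), F i
      = ∑ l : Fin k, F (Fin.castLE hkn l) := by
  rw [filter_lt_eq_map hkn, Finset.sum_map]
  rfl

lemma card_filter_lt (hkn : k ≤ n) :
    (univ.filter (fun i : Fin n => (i : ℕ) < k)).card = k := by
  rw [filter_lt_eq_map hkn, Finset.card_map, Finset.card_univ, Fintype.card_fin]

lemma rearrangement_ineq (hk1 : 1 ≤ k) (hkn : k ≤ n) (lam μ w : Fin n → ℝ)
    (hmono : Monotone lam)
    (hms : Multiset.map lam Finset.univ.val = Multiset.map μ Finset.univ.val)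
    (hw0 : ∀ i, 0 ≤ w i) (hw1 : ∀ i, w i ≤ 1) (hsum : ∑ i, w i = k) :
    ∑ i ∈ univ.filter (fun i : Fin n => (i : ℕ) < k), lam i ≤ ∑ i, μ i * w i := by
  have hkn' : k - 1 < n := by omega
  set c := lam ⟨k - 1, hkn'⟩ with hc
  have step1 : ∑ i, μ i * w i = (∑ i, (μ i - c) * w i) + c * k := by
    have : ∑ i, (μ i - c) * w i = (∑ i, μ i * w i) - c * ∑ i, w i := by
      rw [Finset.mul_sum, ← Finset.sum_sub_distrib]
      exact Finset.sum_congr rfl fun i _ => by ring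
    rw [this, hsum]; ring
  have step2 : ∀ i, min (μ i - c) 0 ≤ (μ i - c) * w i := by
    intro i
    rcases le_total (μ i) c with h | h
    · have h1 : μ i - c ≤ 0 := by linarith
      have := mul_le_mul_of_nonpos_left (hw1 i) h1
      rw [mul_one] at this
      calc min (μ i - c) 0 ≤ μ i - c := min_le_left _ _
        _ ≤ (μ i - c) * w i := this
    · have h1 : 0 ≤ μ i - c := by linarith
      calc min (μ i - c) 0 ≤ 0 := min_le_right _ _
        _ ≤ (μ i - c) * w i := mul_nonneg h1 (hw0 i)
  have step3 : ∑ i, min (lam i - c) 0 = ∑ i, min (μ i - c) 0 := by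
    have e1 : (fun i : Fin n => min (lam i - c) 0) = (fun t : ℝ => min (t - c) 0) ∘ lam := rfl
    have e2 : (fun i : Fin n => min (μ i - c) 0) = (fun t : ℝ => min (t - c) 0) ∘ μ := rfl
    rw [Finset.sum, Finset.sum, e1, e2, ← Multiset.map_map, ← Multiset.map_map, hms]
  have step4 : ∑ i, min (lam i - c) 0
      = ∑ i ∈ univ.filter (fun i : Fin n => (i : ℕ) < k), (lam i - c) := by
    rw [← Finset.sum_filter_add_sum_filter_not univ (fun i : Fin n => (i : ℕ) < k)
      (fun i => min (lam i - c) 0)]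
    have h1 : ∀ i ∈ univ.filter (fun i : Fin n => (i : ℕ) < k),
        min (lam i - c) 0 = lam i - c := by
      intro i hi
      have hik : (i : ℕ) < k := (Finset.mem_filter.mp hi).2
      have : lam i ≤ c := hmono (by simp [Fin.le_def]; omega)
      exact min_eq_left (by linarith)
    have h2 : ∀ i ∈ univ.filter (fun i : Fin n => ¬ (i : ℕ) < k),
        min (lam i - c) 0 = 0 := by
      intro i hi
      have hik : ¬ (i : ℕ) < k := (Finset.mem_filter.mp hi).2
      have : c ≤ lam i := hmono (by simp [Fin.le_def]; omega)
      exact min_eq_right (by linarith)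
    rw [Finset.sum_congr rfl h1, Finset.sum_congr rfl h2, Finset.sum_const, smul_zero, add_zero]
  have step5 : ∑ i ∈ univ.filter (fun i : Fin n => (i : ℕ) < k), (lam i - c)
      = (∑ i ∈ univ.filter (fun i : Fin n => (i : ℕ) < k), lam i) - c * k := by
    rw [Finset.sum_sub_distrib, Finset.sum_const, card_filter_lt hkn, nsmul_eq_mul, mul_comm]
  have hmin : ∑ i, min (μ i - c) 0 ≤ ∑ i, (μ i - c) * w i :=
    Finset.sum_le_sum fun i _ => step2 i
  calc ∑ i ∈ univ.filter (fun i : Fin n => (i : ℕ) < k), lam i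
      = (∑ i ∈ univ.filter (fun i : Fin n => (i : ℕ) < k), (lam i - c)) + c * k := by
        rw [step5]; ring
    _ = (∑ i, min (lam i - c) 0) + c * k := by rw [step4]
    _ = (∑ i, min (μ i - c) 0) + c * k := by rw [step3]
    _ ≤ (∑ i, (μ i - c) * w i) + c * k := by linarith [hmin]
    _ = ∑ i, μ i * w i := step1.symm

end PartB

open Finset

section PartC

variable {n k : ℕ}

local notation "⟪" x ", " y "⟫" => @inner ℝ _ _ x y

lemma QF_eq_inner (A : Matrix (Fin n) (Fin n) ℝ) (v : EuclideanSpace ℝ (Fin n)) :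
    QF A v = ⟪v, (Matrix.toEuclideanLin A) v⟫ := by
  rw [PiLp.inner_apply]
  unfold QF
  refine Finset.sum_congr rfl fun i _ => ?_
  have h1 : ((Matrix.toEuclideanLin A) v) i = ∑ j, A i j * v j := rfl
  rw [h1, RCLike.inner_apply, Finset.sum_mul]
  refine Finset.sum_congr rfl fun j _ => ?_
  simp only [starRingEnd_apply, star_trivial]
  ring

lemma toEuclideanLin_eigenvector (A : Matrix (Fin n) (Fin n) ℝ) (hA : A.IsHermitian) (j : Fin n) :
    (Matrix.toEuclideanLin A) (hA.eigenvectorBasis j) =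
      hA.eigenvalues j • hA.eigenvectorBasis j := by
  apply PiLp.ext
  intro i
  have h := congrFun (hA.mulVec_eigenvectorBasis j) i
  simpa using h

lemma QF_expand (A : Matrix (Fin n) (Fin n) ℝ) (hA : A.IsHermitian)
    (v : EuclideanSpace ℝ (Fin n)) :
    QF A v = ∑ j, hA.eigenvalues j * ⟪hA.eigenvectorBasis j, v⟫ ^ 2 := by
  set b := hA.eigenvectorBasis with hb
  set μ := hA.eigenvalues with hμ
  set T := Matrix.toEuclideanLin A with hT
  have hTv : T v = ∑ j, (⟪b j, v⟫ * μ j) • b j := by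
    conv_lhs => rw [← b.sum_repr' v]
    rw [map_sum]
    refine Finset.sum_congr rfl fun j _ => ?_
    rw [map_smul, toEuclideanLin_eigenvector A hA j, smul_smul]
  have key : ⟪v, T v⟫ = ∑ j, μ j * ⟪b j, v⟫ ^ 2 := by
    rw [hTv, inner_sum]
    refine Finset.sum_congr rfl fun j _ => ?_
    rw [real_inner_smul_right, real_inner_comm]
    ring
  rw [QF_eq_inner, key]

lemma kyFan_lower (hk1 : 1 ≤ k) (hkn : k ≤ n) (A : Matrix (Fin n) (Fin n) ℝ)
    (hA : A.IsHermitian) (lam : Fin n → ℝ) (hmono : Monotone lam)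
    (hchar : A.charpoly = ∏ i, (Polynomial.X - Polynomial.C (lam i)))
    (v : Fin k → EuclideanSpace ℝ (Fin n)) (hv : Orthonormal ℝ v) :
    ∑ i ∈ univ.filter (fun i : Fin n => (i : ℕ) < k), lam i ≤ ∑ l, QF A (v l) := by
  set μ := hA.eigenvalues with hμ
  set b := hA.eigenvectorBasis with hb
  have hms : Multiset.map lam Finset.univ.val = Multiset.map μ Finset.univ.val := by
    refine multiset_eq_of_prod_eq _ _ ?_
    rw [← hchar, charpoly_isHermitian_real A hA]
  set w : Fin n → ℝ := fun i => ∑ l, ⟪b i, v l⟫ ^ 2 with hw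
  have hw0 : ∀ i, 0 ≤ w i := fun i => Finset.sum_nonneg fun l _ => sq_nonneg _
  have hw1 : ∀ i, w i ≤ 1 := by
    intro i
    have hbessel := hv.sum_inner_products_le (𝕜 := ℝ) (x := b i) (s := univ)
    have hbn : ‖b i‖ = 1 := b.orthonormal.1 i
    calc w i = ∑ l, ‖⟪v l, b i⟫‖ ^ 2 := by
          refine Finset.sum_congr rfl fun l _ => ?_
          rw [real_inner_comm, Real.norm_eq_abs, sq_abs]
      _ ≤ ‖b i‖ ^ 2 := hbessel
      _ = 1 := by rw [hbn]; norm_num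
  have hsum : ∑ i, w i = (k : ℝ) := by
    rw [hw, Finset.sum_comm]
    have hone : ∀ l, ∑ i, ⟪b i, v l⟫ ^ 2 = 1 := by
      intro l
      have h2 := b.sum_inner_mul_inner (v l) (v l)
      have h3 : ⟪v l, v l⟫ = 1 := by
        rw [real_inner_self_eq_norm_sq, hv.1 l]; norm_num
      rw [h3] at h2
      rw [← h2]
      refine Finset.sum_congr rfl fun i _ => ?_
      rw [real_inner_comm (b i) (v l)]
      ring
    rw [Finset.sum_congr rfl fun l _ => hone l, Finset.sum_const, Finset.card_univ,
      Fintype.card_fin, nsmul_eq_mul, mul_one]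
  have hQ : ∀ l, QF A (v l) = ∑ i, μ i * ⟪b i, v l⟫ ^ 2 := fun l => QF_expand A hA (v l)
  calc ∑ i ∈ univ.filter (fun i : Fin n => (i : ℕ) < k), lam i
      ≤ ∑ i, μ i * w i := rearrangement_ineq hk1 hkn lam μ w hmono hms hw0 hw1 hsum
    _ = ∑ l, QF A (v l) := by
        rw [Finset.sum_congr rfl fun l (_ : l ∈ univ) => hQ l]
        rw [Finset.sum_comm]
        refine Finset.sum_congr rfl fun i _ => ?_
        rw [hw, Finset.mul_sum]

lemma kyFan_attain (hkn : k ≤ n) (A : Matrix (Fin n) (Fin n) ℝ)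
    (hA : A.IsHermitian) (lam : Fin n → ℝ) (hmono : Monotone lam)
    (hchar : A.charpoly = ∏ i, (Polynomial.X - Polynomial.C (lam i))) :
    ∃ v : Fin k → EuclideanSpace ℝ (Fin n), Orthonormal ℝ v ∧
      ∑ l, QF A (v l) = ∑ i ∈ univ.filter (fun i : Fin n => (i : ℕ) < k), lam i := by
  set μ := hA.eigenvalues with hμ
  set b := hA.eigenvectorBasis with hb
  have hms : Multiset.map lam Finset.univ.val = Multiset.map μ Finset.univ.val := by
    refine multiset_eq_of_prod_eq _ _ ?_
    rw [← hchar, charpoly_isHermitian_real A hA]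
  obtain ⟨σ, hσ⟩ := exists_perm_eq_comp lam μ hmono hms
  refine ⟨⇑b ∘ fun l => σ (Fin.castLE hkn l), ?_, ?_⟩
  · exact b.orthonormal.comp _ (σ.injective.comp (Fin.castLE_injective hkn))
  · have hQb : ∀ j, QF A (b j) = μ j := by
      intro j
      rw [QF_expand A hA]
      have hite : ∀ p, ⟪b p, b j⟫ = if p = j then (1 : ℝ) else 0 :=
        fun p => orthonormal_iff_ite.mp b.orthonormal p j
      rw [Finset.sum_congr rfl fun p (_ : p ∈ univ) => by rw [hite p]]
      simp [hμ]
    rw [sum_filter_lt hkn lam]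
    refine Finset.sum_congr rfl fun l _ => ?_
    rw [Function.comp_apply, hQb, hσ]
    rfl

end PartC

open Finset Metric

section PartD

local notation "⟪" x ", " y "⟫" => @inner ℝ _ _ x y

variable {n : ℕ}

lemma concaveOn_finset_sum {ι : Type*} {E' : Type*} [NormedAddCommGroup E'] [NormedSpace ℝ E']
    {s : Set E'} (hs : Convex ℝ s) (t : Finset ι) (f : ι → E' → ℝ)
    (h : ∀ i ∈ t, ConcaveOn ℝ s (f i)) :
    ConcaveOn ℝ s (fun x => ∑ i ∈ t, f i x) := by
  classical
  induction t using Finset.cons_induction with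
  | empty => simpa using concaveOn_const 0 hs
  | cons a t ha ih =>
    simp only [Finset.sum_cons]
    exact (h a (Finset.mem_cons_self a t)).add
      (ih fun i hi => h i (Finset.mem_cons.2 (Or.inr hi)))

lemma coord_le_norm (v : EuclideanSpace ℝ (Fin n)) (i : Fin n) : |v i| ≤ ‖v‖ := by
  have h := abs_real_inner_le_norm (EuclideanSpace.single i (1 : ℝ)) v
  simpa [EuclideanSpace.inner_single_left, EuclideanSpace.norm_single] using h

lemma semiconcave_of_bound {W s : Set (EuclideanSpace ℝ (Fin n))} (hW : IsOpen W)
    (hs : Convex ℝ s) (hsW : s ⊆ W) {f : EuclideanSpace ℝ (Fin n) → ℝ}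
    (hf : ContDiffOn ℝ 2 f W) {M : ℝ}
    (hM : ∀ x ∈ s, ∀ d : EuclideanSpace ℝ (Fin n),
      fderiv ℝ (fderiv ℝ f) x d d ≤ 2 * M * ‖d‖ ^ 2) :
    ConcaveOn ℝ s (fun x => f x - M * ‖x‖ ^ 2) := by
  have hf1 : DifferentiableOn ℝ f W := hf.differentiableOn (by norm_num)
  have hf' : ContDiffOn ℝ 1 (fderiv ℝ f) W := hf.fderiv_of_isOpen hW (by norm_num)
  have hf'd : DifferentiableOn ℝ (fderiv ℝ f) W := hf'.differentiableOn (by norm_num)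
  refine ⟨hs, ?_⟩
  intro x hx y hy a b ha hb hab
  set v : EuclideanSpace ℝ (Fin n) := y - x with hv
  set c : ℝ → EuclideanSpace ℝ (Fin n) := fun t => x + t • v with hc
  have hcmem : ∀ t ∈ Set.Icc (0:ℝ) 1, c t ∈ s := fun t ht => hs.add_smul_sub_mem hx hy ht
  have hcW : ∀ t ∈ Set.Icc (0:ℝ) 1, c t ∈ W := fun t ht => hsW (hcmem t ht)
  have hcderiv : ∀ t : ℝ, HasDerivAt c v t := by
    intro t
    have h1 : HasDerivAt (fun t : ℝ => t • v) ((1:ℝ) • v) t := (hasDerivAt_id t).smul_const v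
    rw [one_smul] at h1; exact h1.const_add x
  have hccont : Continuous c := continuous_const.add (continuous_id.smul continuous_const)
  set nv : ℝ := ‖v‖ ^ 2 with hnv
  set inn : ℝ := ⟪x, v⟫ with hinn
  set g : ℝ → ℝ := fun t => f (c t) - M * (‖x‖^2 + 2*t*inn + t^2*nv) with hg
  have hnorm : ∀ t : ℝ, ‖c t‖^2 = ‖x‖^2 + 2*t*inn + t^2*nv := by
    intro t
    have h1 : c t = x + t • v := rfl
    rw [h1, norm_add_sq_real, real_inner_smul_right, norm_smul]
    simp only [Real.norm_eq_abs, mul_pow, sq_abs, hnv, hinn]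
    ring
  have hgs : ∀ t, g t = f (c t) - M * ‖c t‖^2 := fun t => by rw [hg]; simp only []; rw [hnorm]
  have hconc : ConcaveOn ℝ (Set.Icc (0:ℝ) 1) g := by
    refine concaveOn_of_hasDerivWithinAt2_nonpos (convex_Icc 0 1)
      (f' := fun t => fderiv ℝ f (c t) v - M * (2*inn + 2*t*nv))
      (f'' := fun t => fderiv ℝ (fderiv ℝ f) (c t) v v - M * (2*nv))
      ?_ ?_ ?_ ?_
    · -- continuity of g on Icc 0 1
      apply ContinuousOn.sub
      · exact (hf.continuousOn.comp hccont.continuousOn (fun t ht => hcW t ht))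
      · fun_prop
    · intro t ht
      have htW : c t ∈ W := hcW t (interior_subset ht)
      have part1 : HasDerivAt (fun t => f (c t)) (fderiv ℝ f (c t) v) t :=
        ((hf1.differentiableAt (hW.mem_nhds htW)).hasFDerivAt).comp_hasDerivAt t (hcderiv t)
      have hpoly : HasDerivAt (fun t : ℝ => ‖x‖^2 + 2*t*inn + t^2*nv) (2*inn + 2*t*nv) t := by
        have h2 : HasDerivAt (fun t : ℝ => t^2*nv) (2*t*nv) t := by
          simpa [pow_one] using (hasDerivAt_pow 2 t).mul_const nv
        have h1 : HasDerivAt (fun t : ℝ => 2*t*inn) (2*inn) t := by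
          simpa using (((hasDerivAt_id t).const_mul (2:ℝ)).mul_const inn)
        have h0 : HasDerivAt (fun t : ℝ => ‖x‖^2 + 2*t*inn + t^2*nv) (0 + 2*inn + 2*t*nv) t :=
          ((hasDerivAt_const t (‖x‖^2)).add h1).add h2
        simpa using h0
      exact ((part1.sub (hpoly.const_mul M)).hasDerivWithinAt)
    · intro t ht
      have htW : c t ∈ W := hcW t (interior_subset ht)
      have hD : HasFDerivAt (fderiv ℝ f) (fderiv ℝ (fderiv ℝ f) (c t)) (c t) :=
        (hf'd.differentiableAt (hW.mem_nhds htW)).hasFDerivAt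
      have q0 : HasDerivAt (fun t => fderiv ℝ f (c t)) ((fderiv ℝ (fderiv ℝ f) (c t)) v) t :=
        hD.comp_hasDerivAt t (hcderiv t)
      have q1 : HasDerivAt (fun t => fderiv ℝ f (c t) v)
          (fderiv ℝ (fderiv ℝ f) (c t) v v) t := by
        have := q0.clm_apply (hasDerivAt_const t v)
        simpa using this
      have q2 : HasDerivAt (fun t : ℝ => M * (2*inn + 2*t*nv)) (M * (2*nv)) t := by
        have h1 : HasDerivAt (fun t : ℝ => 2*t*nv) (2*nv) t := by
          simpa using (((hasDerivAt_id t).const_mul (2:ℝ)).mul_const nv)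
        have h0 := ((hasDerivAt_const t (2*inn)).add h1).const_mul M
        simpa using h0
      exact (q1.sub q2).hasDerivWithinAt
    · intro t ht
      have hts : c t ∈ s := hcmem t (interior_subset ht)
      have := hM (c t) hts v
      simp only [hnv]
      linarith
  have h0mem : (0:ℝ) ∈ Set.Icc (0:ℝ) 1 := by norm_num
  have h1mem : (1:ℝ) ∈ Set.Icc (0:ℝ) 1 := by norm_num
  have hineq := hconc.2 h0mem h1mem ha hb hab
  have hg0 : g 0 = f x - M * ‖x‖^2 := by
    rw [hgs 0]
    have : c 0 = x := by rw [hc]; simp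
    rw [this]
  have hg1 : g 1 = f y - M * ‖y‖^2 := by
    rw [hgs 1]
    have : c 1 = y := by rw [hc]; simp only [one_smul, hv]; abel
    rw [this]
  have hzc : c b = a • x + b • y := by
    rw [hc]; simp only [hv, smul_sub]
    have ha' : a = 1 - b := by linarith
    rw [ha', sub_smul, one_smul]
    abel
  have hgb : g b = f (a • x + b • y) - M * ‖a • x + b • y‖^2 := by
    rw [hgs b, hzc]
  have hb' : a • (0:ℝ) + b • (1:ℝ) = b := by simp
  rw [hb', hg0, hg1, hgb] at hineq
  simpa using hineq

end PartD

section PartE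

variable {n : ℕ} {W : Set (EuclideanSpace ℝ (Fin n))} {u : EuclideanSpace ℝ (Fin n) → ℝ}

lemma const_mul_semiconcave (hW : IsOpen W) {K : Set (EuclideanSpace ℝ (Fin n))}
    (hK : Convex ℝ K) (hKW : K ⊆ W) {H : EuclideanSpace ℝ (Fin n) → ℝ}
    (hH : ContDiffOn ℝ 2 H W) {C : ℝ}
    (hC : ∀ x ∈ K, ‖fderiv ℝ (fderiv ℝ H) x‖ ≤ C) {co : ℝ} (hco : |co| ≤ 1) :
    ConcaveOn ℝ K (fun x => co * H x - (C / 2) * ‖x‖ ^ 2) := by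
  have hHd : DifferentiableOn ℝ H W := hH.differentiableOn (by norm_num)
  have hH' : ContDiffOn ℝ 1 (fderiv ℝ H) W := hH.fderiv_of_isOpen hW (by norm_num)
  have hH'd : DifferentiableOn ℝ (fderiv ℝ H) W := hH'.differentiableOn (by norm_num)
  refine semiconcave_of_bound hW hK hKW (f := fun x => co * H x)
    (contDiffOn_const.mul hH) ?_
  intro x hx d
  have hxW : x ∈ W := hKW hx
  have hev : (fderiv ℝ (fun z => co * H z)) =ᶠ[nhds x] (fun y => co • fderiv ℝ H y) := by
    filter_upwards [hW.mem_nhds hxW] with y hy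
    exact fderiv_const_mul (hHd.differentiableAt (hW.mem_nhds hy)) co
  have h1 : fderiv ℝ (fderiv ℝ (fun z => co * H z)) x
      = co • fderiv ℝ (fderiv ℝ H) x := by
    rw [hev.fderiv_eq]
    exact fderiv_const_smul (hH'd.differentiableAt (hW.mem_nhds hxW)) co
  rw [h1]
  have h2 : ((co • fderiv ℝ (fderiv ℝ H) x) d) d = co * (fderiv ℝ (fderiv ℝ H) x d d) := by
    simp [smul_eq_mul]
  rw [h2]
  set G := fderiv ℝ (fderiv ℝ H) x with hG
  have h3 : |G d d| ≤ C * ‖d‖ ^ 2 := by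
    have e1 : ‖G d d‖ ≤ ‖G d‖ * ‖d‖ := (G d).le_opNorm d
    have e2 : ‖G d‖ ≤ ‖G‖ * ‖d‖ := G.le_opNorm d
    have e3 : ‖G‖ ≤ C := hC x hx
    have e4 : ‖G d d‖ ≤ (‖G‖ * ‖d‖) * ‖d‖ :=
      le_trans e1 (mul_le_mul_of_nonneg_right e2 (norm_nonneg d))
    have e5 : (‖G‖ * ‖d‖) * ‖d‖ ≤ (C * ‖d‖) * ‖d‖ := by
      have := mul_le_mul_of_nonneg_right e3 (norm_nonneg d)
      exact mul_le_mul_of_nonneg_right this (norm_nonneg d)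
    rw [Real.norm_eq_abs] at e4
    calc |G d d| ≤ (C * ‖d‖) * ‖d‖ := le_trans e4 e5
      _ = C * ‖d‖ ^ 2 := by ring
  have h4 : co * (G d d) ≤ |G d d| := by
    calc co * (G d d) ≤ |co * (G d d)| := le_abs_self _
      _ = |co| * |G d d| := abs_mul _ _
      _ ≤ 1 * |G d d| := mul_le_mul_of_nonneg_right hco (abs_nonneg _)
      _ = |G d d| := one_mul _
  calc co * (G d d) ≤ C * ‖d‖ ^ 2 := le_trans h4 h3
    _ = 2 * (C / 2) * ‖d‖ ^ 2 := by ring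

lemma hessM_eq_fderiv2 (hu : ContDiffOn ℝ 4 u W) (hW : IsOpen W)
    {x : EuclideanSpace ℝ (Fin n)} (hx : x ∈ W) (i j : Fin n) :
    hessM u x i j = fderiv ℝ (fderiv ℝ u) x (EuclideanSpace.single i 1)
      (EuclideanSpace.single j 1) := by
  have hu' : ContDiffOn ℝ 3 (fderiv ℝ u) W := hu.fderiv_of_isOpen hW (by norm_num)
  have hu'd : DifferentiableOn ℝ (fderiv ℝ u) W := hu'.differentiableOn (by norm_num)
  have hpdj : (fun y => pd u y (j : ℕ)) =
      fun y => fderiv ℝ u y (EuclideanSpace.single j 1) := by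
    funext y
    rw [pd, dif_pos j.isLt]
  have h0 : hessM u x i j
      = fderiv ℝ (fun y => fderiv ℝ u y (EuclideanSpace.single j 1)) x
          (EuclideanSpace.single i 1) := by
    show pd (fun y => pd u y (j : ℕ)) x (i : ℕ) = _
    rw [hpdj, pd, dif_pos i.isLt]
  rw [h0, fderiv_clm_apply (hu'd.differentiableAt (hW.mem_nhds hx))
    (differentiableAt_const _)]
  simp

lemma hessM_isHermitian (hu : ContDiffOn ℝ 4 u W) (hW : IsOpen W)
    {x : EuclideanSpace ℝ (Fin n)} (hx : x ∈ W) : (hessM u x).IsHermitian := by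
  have hud : DifferentiableOn ℝ u W := hu.differentiableOn (by norm_num)
  have hu' : ContDiffOn ℝ 3 (fderiv ℝ u) W := hu.fderiv_of_isOpen hW (by norm_num)
  have hu'd : DifferentiableOn ℝ (fderiv ℝ u) W := hu'.differentiableOn (by norm_num)
  have hsymm : ∀ v w, fderiv ℝ (fderiv ℝ u) x v w = fderiv ℝ (fderiv ℝ u) x w v := by
    intro v w
    refine second_derivative_symmetric_of_eventually_of_real (x := x) (f := u) (f' := fderiv ℝ u) (f'' := fderiv ℝ (fderiv ℝ u) x) ?_ ?_ v w
    · filter_upwards [hW.mem_nhds hx] with y hy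
      exact (hud.differentiableAt (hW.mem_nhds hy)).hasFDerivAt
    · exact (hu'd.differentiableAt (hW.mem_nhds hx)).hasFDerivAt
  unfold Matrix.IsHermitian
  ext i j
  rw [Matrix.conjTranspose_apply, star_trivial, hessM_eq_fderiv2 hu hW hx,
    hessM_eq_fderiv2 hu hW hx]
  exact hsymm _ _

lemma hessM_entry_contDiffOn (hu : ContDiffOn ℝ 4 u W) (hW : IsOpen W) (i j : Fin n) :
    ContDiffOn ℝ 2 (fun x => hessM u x i j) W := by
  have hu' : ContDiffOn ℝ 3 (fderiv ℝ u) W := hu.fderiv_of_isOpen hW (by norm_num)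
  have hgj : ContDiffOn ℝ 3 (fun y => fderiv ℝ u y (EuclideanSpace.single j 1)) W :=
    hu'.clm_apply contDiffOn_const
  have hfg : ContDiffOn ℝ 2
      (fderiv ℝ (fun y => fderiv ℝ u y (EuclideanSpace.single j 1))) W :=
    hgj.fderiv_of_isOpen hW (by norm_num)
  have heq : (fun x => hessM u x i j) =
      fun x => fderiv ℝ (fun y => fderiv ℝ u y (EuclideanSpace.single j 1)) x
        (EuclideanSpace.single i 1) := by
    funext x
    show pd (fun y => pd u y (j : ℕ)) x (i : ℕ) = _
    have hpdj : (fun y => pd u y (j : ℕ)) =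
        fun y => fderiv ℝ u y (EuclideanSpace.single j 1) := by
      funext y
      rw [pd, dif_pos j.isLt]
    rw [hpdj, pd, dif_pos i.isLt]
  rw [heq]
  exact hfg.clm_apply contDiffOn_const

end PartE

/-- let `U ⊂ ℝⁿ` be a bounded convex set and let `u` be `C⁴` on `Ū`
(formalized: `u` is `C⁴` on an open set `W` containing `closure U`).  If
`lam x 0 ≤ ⋯ ≤ lam x (n-1)` denote the eigenvalues of the Hessian `D²u(x)` in
increasing order (with multiplicity, encoded via the factorization of the
characteristic polynomial), then for each `1 ≤ k ≤ n` the function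
`x ↦ λ₁(x) + ⋯ + λ_k(x)` is semi-concave on `Ū`: there is `M` with
`x ↦ ∑_{i<k} lam x i - M‖x‖²` concave on `closure U`. -/
theorem sum_eigenvalues_semiConcave (n k : ℕ) (hk1 : 1 ≤ k) (hkn : k ≤ n)
    (U W : Set (EuclideanSpace ℝ (Fin n)))
    (hUb : Bornology.IsBounded U) (hUc : Convex ℝ U)
    (hW : IsOpen W) (hUW : closure U ⊆ W)
    (u : EuclideanSpace ℝ (Fin n) → ℝ) (hu : ContDiffOn ℝ 4 u W)
    (lam : EuclideanSpace ℝ (Fin n) → Fin n → ℝ)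
    (hlam : ∀ x ∈ closure U, Monotone (lam x) ∧
      (hessM u x).charpoly = ∏ i, (Polynomial.X - Polynomial.C (lam x i))) :
    ∃ M : ℝ, ConcaveOn ℝ (closure U)
      (fun x => (∑ i ∈ Finset.univ.filter (fun i : Fin n => (i : ℕ) < k), lam x i)
        - M * ‖x‖ ^ 2) := by
  classical
  have hKconv : Convex ℝ (closure U) := hUc.closure
  have hKcomp : IsCompact (closure U) := hUb.isCompact_closure
  have hent : ∀ i j : Fin n, ContDiffOn ℝ 2 (fun x => hessM u x i j) W :=
    fun i j => hessM_entry_contDiffOn hu hW i j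
  have hbnd : ∀ i j : Fin n, ∃ C : ℝ, ∀ x ∈ closure U,
      ‖fderiv ℝ (fderiv ℝ (fun z => hessM u z i j)) x‖ ≤ C := by
    intro i j
    have h1 : ContDiffOn ℝ 1 (fderiv ℝ (fun z => hessM u z i j)) W :=
      (hent i j).fderiv_of_isOpen hW (by norm_num)
    have h2 : ContinuousOn (fderiv ℝ (fderiv ℝ (fun z => hessM u z i j))) W :=
      h1.continuousOn_fderiv_of_isOpen hW (by norm_num)
    exact hKcomp.exists_bound_of_continuousOn (f := fderiv ℝ (fderiv ℝ (fun z => hessM u z i j))) (by exact h2.mono hUW)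
  choose Cf hCf using hbnd
  set C : ℝ := ∑ i : Fin n, ∑ j : Fin n, |Cf i j| with hC
  have hCb : ∀ i j : Fin n, ∀ x ∈ closure U,
      ‖fderiv ℝ (fderiv ℝ (fun z => hessM u z i j)) x‖ ≤ C := by
    intro i j x hx
    refine le_trans (hCf i j x hx) ?_
    have h1 : |Cf i j| ≤ ∑ j', |Cf i j'| :=
      Finset.single_le_sum (f := fun j' => |Cf i j'|) (fun _ _ => abs_nonneg _)
        (Finset.mem_univ j)
    have h2 : ∑ j', |Cf i j'| ≤ C :=
      Finset.single_le_sum (f := fun i' => ∑ j', |Cf i' j'|)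
        (fun _ _ => Finset.sum_nonneg fun _ _ => abs_nonneg _) (Finset.mem_univ i)
    calc Cf i j ≤ |Cf i j| := le_abs_self _
      _ ≤ C := le_trans h1 h2
  refine ⟨(k * n * n : ℝ) * (C / 2), hKconv, ?_⟩
  intro x hx y hy a b ha hb hab
  set M : ℝ := (k * n * n : ℝ) * (C / 2) with hM
  set z := a • x + b • y with hz
  have hzK : z ∈ closure U := hKconv hx hy ha hb hab
  obtain ⟨hmonoz, hcharz⟩ := hlam z hzK
  obtain ⟨v, hv, hvsum⟩ := kyFan_attain hkn (hessM u z)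
    (hessM_isHermitian hu hW (hUW hzK)) (lam z) hmonoz hcharz
  have hvle : ∀ (l : Fin k) (i : Fin n), |v l i| ≤ 1 := by
    intro l i
    have h := coord_le_norm (v l) i
    rw [hv.1 l] at h
    exact h
  have hconcterm : ∀ (l : Fin k) (i j : Fin n),
      ConcaveOn ℝ (closure U)
        (fun p => (v l i * v l j) * hessM u p i j - (C / 2) * ‖p‖ ^ 2) := by
    intro l i j
    refine const_mul_semiconcave hW hKconv hUW (hent i j) (hCb i j) ?_
    calc |v l i * v l j| = |v l i| * |v l j| := abs_mul _ _
      _ ≤ 1 * 1 := mul_le_mul (hvle l i) (hvle l j) (abs_nonneg _) zero_le_one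
      _ = 1 := one_mul 1
  have hsumconc : ConcaveOn ℝ (closure U) (fun p => ∑ l : Fin k, ∑ i : Fin n, ∑ j : Fin n,
      ((v l i * v l j) * hessM u p i j - (C / 2) * ‖p‖ ^ 2)) := by
    refine concaveOn_finset_sum hKconv _ _ fun l _ => ?_
    refine concaveOn_finset_sum hKconv _ _ fun i _ => ?_
    refine concaveOn_finset_sum hKconv _ _ fun j _ => ?_
    exact hconcterm l i j
  have hFconc : ConcaveOn ℝ (closure U)
      (fun p => (∑ l, QF (hessM u p) (v l)) - M * ‖p‖ ^ 2) := by
    have hfe : (fun p => (∑ l, QF (hessM u p) (v l)) - M * ‖p‖ ^ 2)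
        = (fun p => ∑ l : Fin k, ∑ i : Fin n, ∑ j : Fin n,
            ((v l i * v l j) * hessM u p i j - (C / 2) * ‖p‖ ^ 2)) := by
      funext p
      rw [hM]
      simp only [QF, Finset.sum_sub_distrib, Finset.sum_const, Finset.card_univ,
        Fintype.card_fin, nsmul_eq_mul]
      ring
    rw [hfe]
    exact hsumconc
  obtain ⟨hmonox, hcharx⟩ := hlam x hx
  obtain ⟨hmonoy, hchary⟩ := hlam y hy
  have hlx : ∑ i ∈ Finset.univ.filter (fun i : Fin n => (i : ℕ) < k), lam x i
      ≤ ∑ l, QF (hessM u x) (v l) :=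
    kyFan_lower hk1 hkn _ (hessM_isHermitian hu hW (hUW hx)) _ hmonox hcharx v hv
  have hly : ∑ i ∈ Finset.univ.filter (fun i : Fin n => (i : ℕ) < k), lam y i
      ≤ ∑ l, QF (hessM u y) (v l) :=
    kyFan_lower hk1 hkn _ (hessM_isHermitian hu hW (hUW hy)) _ hmonoy hchary v hv
  have hmain := hFconc.2 hx hy ha hb hab
  simp only [smul_eq_mul] at hmain ⊢
  rw [hvsum] at hmain
  have t1 : a * ((∑ i ∈ Finset.univ.filter (fun i : Fin n => (i : ℕ) < k), lam x i)
      - M * ‖x‖ ^ 2) ≤ a * ((∑ l, QF (hessM u x) (v l)) - M * ‖x‖ ^ 2) :=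
    mul_le_mul_of_nonneg_left (by linarith) ha
  have t2 : b * ((∑ i ∈ Finset.univ.filter (fun i : Fin n => (i : ℕ) < k), lam y i)
      - M * ‖y‖ ^ 2) ≤ b * ((∑ l, QF (hessM u y) (v l)) - M * ‖y‖ ^ 2) :=
    mul_le_mul_of_nonneg_left (by linarith) hb
  linarith
end

section
/- Let ℓ ≥ 1, let ε > 0, let λ₁, …, λ_ℓ be nonnegative real numbers, and let v₁, …, v_ℓ ∈ ℝⁿ. For k = 1, …, ℓ set Q_k = Σ_{i=1}^{k} (k+1−i) λ_i = λ_k + 2λ_{k−1} + ⋯ + kλ₁ and w_k = Σ_{i=1}^{k} (k+1−i) v_i. Then there is a constant C depending only on ℓ such that Σ_{k=1}^{ℓ} (Q_k + ε)^{−1/2} Σ_{i=1}^{k} |v_i| ≤ C Σ_{k=1}^{ℓ} (Q_k + ε)^{−1/2} |w_k|, where |·| denotes the Euclidean norm on ℝⁿ. -/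
-- telescoping identity for W
lemma aux_W_succ {n : ℕ} (v : ℕ → EuclideanSpace ℝ (Fin n)) (k : ℕ) :
    ∑ i ∈ Finset.range (k+1), ((k+1 - i : ℕ) : ℝ) • v i
      = (∑ i ∈ Finset.range k, ((k - i : ℕ) : ℝ) • v i) + ∑ i ∈ Finset.range (k+1), v i := by
  have h0 : ∑ i ∈ Finset.range k, ((k-i:ℕ):ℝ) • v i
      = ∑ i ∈ Finset.range (k+1), ((k-i:ℕ):ℝ) • v i := by
    rw [Finset.sum_range_succ]; simp
  rw [h0, ← Finset.sum_add_distrib]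
  apply Finset.sum_congr rfl
  intro i hi
  have hik : (k + 1 - i : ℕ) = (k - i) + 1 := by
    have := Finset.mem_range.mp hi; omega
  rw [hik]
  push_cast
  rw [add_smul, one_smul]

lemma aux_sum_v_le {n : ℕ} (v : ℕ → EuclideanSpace ℝ (Fin n)) (k : ℕ) :
    ∑ i ∈ Finset.range k, ‖v i‖ ≤
      4 * ∑ j ∈ Finset.Icc 1 k, ‖∑ i ∈ Finset.range j, ((j - i : ℕ) : ℝ) • v i‖ := by
  set W : ℕ → EuclideanSpace ℝ (Fin n) :=
    fun j => ∑ i ∈ Finset.range j, ((j - i : ℕ) : ℝ) • v i with hW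
  set S : ℕ → EuclideanSpace ℝ (Fin n) := fun j => ∑ i ∈ Finset.range j, v i with hS
  have hSW : ∀ j, S (j+1) = W (j+1) - W j := by
    intro j
    have := aux_W_succ v j
    simp only [hW, hS]
    rw [this]; abel
  have hS0 : S 0 = 0 := by simp [hS]
  have hW0 : W 0 = 0 := by simp [hW]
  have hv : ∀ i, v i = S (i+1) - S i := by
    intro i; simp [hS, Finset.sum_range_succ]
  -- step 1 : bound by norms of S
  have step1 : ∑ i ∈ Finset.range k, ‖v i‖ ≤ 2 * ∑ j ∈ Finset.range (k+1), ‖S j‖ := by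
    have h1 : ∑ i ∈ Finset.range k, ‖v i‖ ≤
        ∑ i ∈ Finset.range k, (‖S (i+1)‖ + ‖S i‖) := by
      apply Finset.sum_le_sum
      intro i _
      rw [hv i]
      exact norm_sub_le _ _
    have h2 : ∑ i ∈ Finset.range k, ‖S (i+1)‖ ≤ ∑ j ∈ Finset.range (k+1), ‖S j‖ := by
      rw [Finset.sum_range_succ' (fun j => ‖S j‖) k]
      simp [hS0]
    have h3 : ∑ i ∈ Finset.range k, ‖S i‖ ≤ ∑ j ∈ Finset.range (k+1), ‖S j‖ := by
      apply Finset.sum_le_sum_of_subset_of_nonneg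
      · exact Finset.range_subset_range.mpr (Nat.le_succ k)
      · intros; positivity
    rw [Finset.sum_add_distrib] at h1
    linarith
  -- step 2 : bound norms of S by norms of W
  have step2 : ∑ j ∈ Finset.range (k+1), ‖S j‖ ≤ 2 * ∑ j ∈ Finset.range (k+1), ‖W j‖ := by
    rw [Finset.sum_range_succ' (fun j => ‖S j‖) k]
    have h1 : ∑ i ∈ Finset.range k, ‖S (i+1)‖ ≤
        ∑ i ∈ Finset.range k, (‖W (i+1)‖ + ‖W i‖) := by
      apply Finset.sum_le_sum
      intro i _
      rw [hSW i]
      exact norm_sub_le _ _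
    have h2 : ∑ i ∈ Finset.range k, ‖W (i+1)‖ ≤ ∑ j ∈ Finset.range (k+1), ‖W j‖ := by
      rw [Finset.sum_range_succ' (fun j => ‖W j‖) k]
      simp [hW0]
    have h3 : ∑ i ∈ Finset.range k, ‖W i‖ ≤ ∑ j ∈ Finset.range (k+1), ‖W j‖ := by
      apply Finset.sum_le_sum_of_subset_of_nonneg
      · exact Finset.range_subset_range.mpr (Nat.le_succ k)
      · intros; positivity
    rw [Finset.sum_add_distrib] at h1
    simp only [hS0, norm_zero, add_zero]
    linarith
  -- step 3 : identify range (k+1) sum with Icc 1 k sum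
  have step3 : ∑ j ∈ Finset.range (k+1), ‖W j‖ = ∑ j ∈ Finset.Icc 1 k, ‖W j‖ := by
    rw [Finset.sum_range_succ' (fun j => ‖W j‖) k]
    have : Finset.Icc 1 k = Finset.Ico 1 (k+1) := by
      rw [Finset.Ico_add_one_right_eq_Icc]
    rw [this, Finset.sum_Ico_eq_sum_range]
    simp [hW0, add_comm]
  calc ∑ i ∈ Finset.range k, ‖v i‖ ≤ 2 * ∑ j ∈ Finset.range (k+1), ‖S j‖ := step1
    _ ≤ 2 * (2 * ∑ j ∈ Finset.range (k+1), ‖W j‖) := by linarith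
    _ = 4 * ∑ j ∈ Finset.Icc 1 k, ‖W j‖ := by rw [step3]; ring

lemma aux_Q_mono (lam : ℕ → ℝ) {j k : ℕ} (h : j ≤ k) (hlam : ∀ i < k, 0 ≤ lam i) :
    ∑ i ∈ Finset.range j, ((j - i : ℕ) : ℝ) * lam i ≤
      ∑ i ∈ Finset.range k, ((k - i : ℕ) : ℝ) * lam i := by
  calc ∑ i ∈ Finset.range j, ((j - i : ℕ) : ℝ) * lam i
      ≤ ∑ i ∈ Finset.range j, ((k - i : ℕ) : ℝ) * lam i := by
        apply Finset.sum_le_sum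
        intro i hi
        have hi' : i < k := lt_of_lt_of_le (Finset.mem_range.mp hi) h
        have h1 : ((j - i : ℕ) : ℝ) ≤ ((k - i : ℕ) : ℝ) := by
          exact_mod_cast Nat.sub_le_sub_right h i
        exact mul_le_mul_of_nonneg_right h1 (hlam i hi')
    _ ≤ ∑ i ∈ Finset.range k, ((k - i : ℕ) : ℝ) * lam i := by
        apply Finset.sum_le_sum_of_subset_of_nonneg (Finset.range_subset_range.mpr h)
        intro i hi _
        have hi' : i < k := Finset.mem_range.mp hi
        exact mul_nonneg (by positivity) (hlam i hi')

/-- the pointwise gradient inequality (4.1).  For `ℓ ≥ 1` there is a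
constant `C` depending only on `ℓ` such that for all `ε > 0`, all nonnegative reals
`λ₁, …, λ_ℓ` and all vectors `v₁, …, v_ℓ ∈ ℝⁿ`, writing (with 0-based indexing)
`Q_k = ∑_{i<k} (k-i) λ_i` and `w_k = ∑_{i<k} (k-i) v_i` for `k = 1, …, ℓ`, one has
`∑_{k=1}^{ℓ} (Q_k + ε)^{-1/2} ∑_{i<k} |v_i| ≤ C ∑_{k=1}^{ℓ} (Q_k + ε)^{-1/2} |w_k|`. -/
theorem gradient_inequality (ℓ : ℕ) (hℓ : 1 ≤ ℓ) :
    ∃ C : ℝ, 0 < C ∧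
      ∀ (n : ℕ) (ε : ℝ), 0 < ε →
      ∀ (lam : ℕ → ℝ), (∀ i < ℓ, 0 ≤ lam i) →
      ∀ (v : ℕ → EuclideanSpace ℝ (Fin n)),
        ∑ k ∈ Finset.Icc 1 ℓ,
            (Real.sqrt ((∑ i ∈ Finset.range k, ((k - i : ℕ) : ℝ) * lam i) + ε))⁻¹ *
              ∑ i ∈ Finset.range k, ‖v i‖
          ≤ C * ∑ k ∈ Finset.Icc 1 ℓ,
              (Real.sqrt ((∑ i ∈ Finset.range k, ((k - i : ℕ) : ℝ) * lam i) + ε))⁻¹ *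
                ‖∑ i ∈ Finset.range k, ((k - i : ℕ) : ℝ) • v i‖ := by
  have hℓR : (0:ℝ) < ℓ := by exact_mod_cast hℓ
  refine ⟨4 * ℓ, by linarith, ?_⟩
  intro n ε hε lam hlam v
  set Q : ℕ → ℝ := fun k => ∑ i ∈ Finset.range k, ((k - i : ℕ) : ℝ) * lam i with hQ
  set r : ℕ → ℝ := fun k => (Real.sqrt (Q k + ε))⁻¹ with hr
  set W : ℕ → EuclideanSpace ℝ (Fin n) :=
    fun j => ∑ i ∈ Finset.range j, ((j - i : ℕ) : ℝ) • v i with hWdef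
  show ∑ k ∈ Finset.Icc 1 ℓ, r k * ∑ i ∈ Finset.range k, ‖v i‖
      ≤ (4 * ℓ) * ∑ k ∈ Finset.Icc 1 ℓ, r k * ‖W k‖
  have hQpos : ∀ k, k ≤ ℓ → 0 < Q k + ε := by
    intro k hk
    have : 0 ≤ Q k := by
      apply Finset.sum_nonneg
      intro i hi
      have : i < ℓ := lt_of_lt_of_le (Finset.mem_range.mp hi) hk
      exact mul_nonneg (by positivity) (hlam i this)
    linarith
  have hrpos : ∀ k, k ≤ ℓ → 0 < r k := by
    intro k hk
    exact inv_pos.mpr (Real.sqrt_pos.mpr (hQpos k hk))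
  have hranti : ∀ j k, j ≤ k → k ≤ ℓ → r k ≤ r j := by
    intro j k hjk hk
    apply inv_anti₀ (Real.sqrt_pos.mpr (hQpos j (hjk.trans hk)))
    apply Real.sqrt_le_sqrt
    have := aux_Q_mono lam hjk (fun i hi => hlam i (lt_of_lt_of_le hi hk))
    simpa [hQ] using by linarith [this]
  set R : ℝ := ∑ k ∈ Finset.Icc 1 ℓ, r k * ‖W k‖ with hRdef
  have hR0 : 0 ≤ R := by
    apply Finset.sum_nonneg
    intro k hk
    have hk' := (Finset.mem_Icc.mp hk).2
    exact mul_nonneg (hrpos k hk').le (norm_nonneg _)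
  have key : ∀ k ∈ Finset.Icc 1 ℓ, r k * ∑ i ∈ Finset.range k, ‖v i‖ ≤ 4 * R := by
    intro k hk
    have hk' := (Finset.mem_Icc.mp hk).2
    have h1 : r k * ∑ i ∈ Finset.range k, ‖v i‖ ≤
        r k * (4 * ∑ j ∈ Finset.Icc 1 k, ‖W j‖) :=
      mul_le_mul_of_nonneg_left (aux_sum_v_le v k) (hrpos k hk').le
    have h2 : r k * (4 * ∑ j ∈ Finset.Icc 1 k, ‖W j‖)
        = 4 * ∑ j ∈ Finset.Icc 1 k, r k * ‖W j‖ := by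
      rw [mul_left_comm, Finset.mul_sum]
    have h3 : ∑ j ∈ Finset.Icc 1 k, r k * ‖W j‖ ≤ ∑ j ∈ Finset.Icc 1 k, r j * ‖W j‖ := by
      apply Finset.sum_le_sum
      intro j hj
      have hj2 := Finset.mem_Icc.mp hj
      exact mul_le_mul_of_nonneg_right (hranti j k hj2.2 hk') (norm_nonneg _)
    have h4 : ∑ j ∈ Finset.Icc 1 k, r j * ‖W j‖ ≤ R := by
      apply Finset.sum_le_sum_of_subset_of_nonneg
      · exact Finset.Icc_subset_Icc_right hk'
      · intro j hj _
        have hj' := (Finset.mem_Icc.mp hj).2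
        exact mul_nonneg (hrpos j hj').le (norm_nonneg _)
    calc r k * ∑ i ∈ Finset.range k, ‖v i‖ ≤ 4 * ∑ j ∈ Finset.Icc 1 k, r k * ‖W j‖ := by
          rw [← h2]; exact h1
      _ ≤ 4 * ∑ j ∈ Finset.Icc 1 k, r j * ‖W j‖ := by linarith
      _ ≤ 4 * R := by linarith
  calc ∑ k ∈ Finset.Icc 1 ℓ, r k * ∑ i ∈ Finset.range k, ‖v i‖
      ≤ ∑ _k ∈ Finset.Icc 1 ℓ, 4 * R := Finset.sum_le_sum key
    _ = (4 * ℓ) * R := by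
        rw [Finset.sum_const, Nat.card_Icc]
        simp
        ring
end
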